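/- There exist a dimension d ≥ 1, a family of d×d density matrices ρ_x indexed by x ∈ {0,1}^6, and Hermitian matrices M_t (t ∈ {1,…,6}) with 0 ⪯ M_t ⪯ I, such that (i) for every subset S ⊆ {1,…,6} of odd size |S| ≥ 3, Σ_{x : x_S = 0} ρ_x = Σ_{x : x_S = 1} ρ_x (odd-parity-obliviousness), and (ii) for every x ∈ {0,1}^6 and every t, Re tr(ρ_x M_t) = (1/2)(1 + (−1)^{x_t}/√3); in particular every bit is decoded with bias 1/√3 > 1/√6, so odd-parity-oblivious quantum RACs can exceed the parity-oblivious bound 1/√n. -/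

import Mathlib

open Matrix BigOperators Finset Kronecker
open scoped ComplexOrder

noncomputable section QRAC16

private def cc : ZMod 2 → ℂ := fun z => if z = 0 then 1 else -1

private noncomputable def uu : ℂ := ((Real.sqrt 3 : ℝ) : ℂ)⁻¹

private lemma cc0 : cc 0 = 1 := rfl
private lemma cc1 : cc 1 = -1 := by simp [cc]
private lemma z11 : (1 + 1 : ZMod 2) = 0 := rfl

private lemma cc_star (z : ZMod 2) : star (cc z) = cc z := by
  unfold cc; split <;> simp

private lemma uu_star : star uu = uu := by
  simp [uu, ← Complex.ofReal_inv]

private lemma cc_sq (z : ZMod 2) : cc z * cc z = 1 := by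
  unfold cc; split <;> norm_num

private lemma cc_add (y z : ZMod 2) : cc (y + z) = cc y * cc z := by
  rcases (show y = 0 ∨ y = 1 by revert y; decide) with rfl | rfl <;>
    rcases (show z = 0 ∨ z = 1 by revert z; decide) with rfl | rfl <;>
    simp only [z11, zero_add, add_zero, cc0, cc1] <;> norm_num

private lemma uu_sq : uu * uu = 1/3 := by
  unfold uu
  rw [← mul_inv, ← Complex.ofReal_mul, Real.mul_self_sqrt (by norm_num)]
  norm_num

private noncomputable def Q (a b e : ZMod 2) : Matrix (Fin 2) (Fin 2) ℂ :=
  (2:ℂ)⁻¹ • !![1 + cc e * uu, (cc a - Complex.I * cc b) * uu;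
               (cc a + Complex.I * cc b) * uu, 1 - cc e * uu]

private lemma Q_herm (a b e : ZMod 2) : (Q a b e)ᴴ = Q a b e := by
  unfold Q
  ext i j
  fin_cases i <;> fin_cases j <;>
      simp [conjTranspose_apply, star_mul', star_add, star_sub, cc_star, uu_star] <;>
    first | tauto | ring1

private lemma Q_idem (a b e : ZMod 2) : Q a b e * Q a b e = Q a b e := by
  have ha := cc_sq a; have hb := cc_sq b; have he := cc_sq e; have hu := uu_sq
  unfold Q
  ext i j
  fin_cases i <;> fin_cases j <;>
      simp [Matrix.mul_apply, Fin.sum_univ_two, Matrix.smul_apply, smul_eq_mul] <;>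
    first
      | ring1
      | linear_combination uu*uu/4*he + uu*uu/4*ha - Complex.I^2*(uu*uu)/4*hb
          - uu*uu/4*Complex.I_sq + (3/4 : ℂ)*hu

private lemma Q_trace (a b e : ZMod 2) : (Q a b e).trace = 1 := by
  simp [Q, Matrix.trace, Fin.sum_univ_two]
  ring

/-- Kronecker product reindexed to `Fin 4`. -/
private noncomputable def K (A B : Matrix (Fin 2) (Fin 2) ℂ) : Matrix (Fin 4) (Fin 4) ℂ :=
  Matrix.reindex (finProdFinEquiv (m := 2) (n := 2)) (finProdFinEquiv (m := 2) (n := 2))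
    (A ⊗ₖ B)

private lemma K_mul (A B C D : Matrix (Fin 2) (Fin 2) ℂ) :
    K A B * K C D = K (A * C) (B * D) := by
  simp only [K, reindex_apply]
  rw [Matrix.submatrix_mul_equiv, Matrix.mul_kronecker_mul]

private lemma K_trace (A B : Matrix (Fin 2) (Fin 2) ℂ) :
    (K A B).trace = A.trace * B.trace := by
  simp only [K, reindex_apply]
  rw [← Matrix.trace_kronecker]
  simp only [Matrix.trace, Matrix.diag, Matrix.submatrix_apply]
  exact Equiv.sum_comp (finProdFinEquiv (m := 2) (n := 2)).symm
    (fun p => (A ⊗ₖ B) p p)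

private lemma K_one : K 1 1 = 1 := by
  simp only [K, Matrix.one_kronecker_one, reindex_apply, submatrix_one_equiv]

private lemma K_conjT (A B : Matrix (Fin 2) (Fin 2) ℂ) : (K A B)ᴴ = K Aᴴ Bᴴ := by
  ext i j
  simp [K, reindex_apply, conjTranspose_apply, submatrix_apply, kroneckerMap_apply, star_mul']

private lemma K_sum_left {ι : Type*} (s : Finset ι) (f : ι → Matrix (Fin 2) (Fin 2) ℂ)
    (B : Matrix (Fin 2) (Fin 2) ℂ) : K (∑ i ∈ s, f i) B = ∑ i ∈ s, K (f i) B := by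
  ext i j
  simp [K, reindex_apply, submatrix_apply, kroneckerMap_apply, Matrix.sum_apply,
    Finset.sum_mul]

private lemma K_sum_right {ι : Type*} (s : Finset ι) (A : Matrix (Fin 2) (Fin 2) ℂ)
    (f : ι → Matrix (Fin 2) (Fin 2) ℂ) : K A (∑ i ∈ s, f i) = ∑ i ∈ s, K A (f i) := by
  ext i j
  simp [K, reindex_apply, submatrix_apply, kroneckerMap_apply, Matrix.sum_apply,
    Finset.mul_sum]

private lemma K_smul_left (r : ℂ) (A B : Matrix (Fin 2) (Fin 2) ℂ) :
    K (r • A) B = r • K A B := by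
  ext i j
  simp [K, reindex_apply, submatrix_apply, kroneckerMap_apply, smul_eq_mul]
  ring

private lemma K_smul_right (r : ℂ) (A B : Matrix (Fin 2) (Fin 2) ℂ) :
    K A (r • B) = r • K A B := by
  ext i j
  simp [K, reindex_apply, submatrix_apply, kroneckerMap_apply, smul_eq_mul]
  ring

private lemma K_zero_left (B : Matrix (Fin 2) (Fin 2) ℂ) : K 0 B = 0 := by
  ext i j; simp [K, reindex_apply, submatrix_apply, kroneckerMap_apply]

private lemma K_zero_right (A : Matrix (Fin 2) (Fin 2) ℂ) : K A 0 = 0 := by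
  ext i j; simp [K, reindex_apply, submatrix_apply, kroneckerMap_apply]

private lemma K_sub_left (A B C : Matrix (Fin 2) (Fin 2) ℂ) :
    K (A - B) C = K A C - K B C := by
  ext i j
  simp [K, reindex_apply, submatrix_apply, kroneckerMap_apply, sub_mul]

private lemma proj_psd {n : ℕ} (A : Matrix (Fin n) (Fin n) ℂ) (hh : Aᴴ = A)
    (hi : A * A = A) : A.PosSemidef := by
  have h := Matrix.posSemidef_conjTranspose_mul_self A
  rwa [hh, hi] at h

private lemma one_sub_idem {n : ℕ} (A : Matrix (Fin n) (Fin n) ℂ) (h : A * A = A) :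
    (1 - A) * (1 - A) = 1 - A := by
  rw [sub_mul, one_mul, mul_sub, mul_one, h]
  abel

/-- measurement projectors on one qubit -/
private noncomputable def NN : Fin 3 → Matrix (Fin 2) (Fin 2) ℂ :=
  ![(2:ℂ)⁻¹ • !![1, 1; 1, 1],
    (2:ℂ)⁻¹ • !![1, -Complex.I; Complex.I, 1],
    !![1, 0; 0, 0]]

private lemma NN_herm (j : Fin 3) : (NN j)ᴴ = NN j := by
  fin_cases j <;>
    · ext i k
      fin_cases i <;> fin_cases k <;> simp [NN, conjTranspose_apply]

private lemma NN_idem (j : Fin 3) : NN j * NN j = NN j := by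
  fin_cases j <;>
    · ext i k
      fin_cases i <;> fin_cases k <;>
          simp [NN, Matrix.mul_apply, Fin.sum_univ_two, smul_eq_mul] <;>
        first
          | ring1
          | linear_combination (-1/4 : ℂ) * Complex.I_sq
          | linear_combination (1/4 : ℂ) * Complex.I_sq

private lemma trace_QN0 (a b e : ZMod 2) :
    (Q a b e * NN 0).trace = 2⁻¹ * (1 + cc a * uu) := by
  simp [Q, NN, Matrix.trace, Matrix.mul_apply, Fin.sum_univ_two, smul_eq_mul]
  all_goals ring1

private lemma trace_QN1 (a b e : ZMod 2) :
    (Q a b e * NN 1).trace = 2⁻¹ * (1 + cc b * uu) := by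
  simp [Q, NN, Matrix.trace, Matrix.mul_apply, Fin.sum_univ_two, smul_eq_mul]
  all_goals linear_combination (-(cc b * uu)/2) * Complex.I_sq

private lemma trace_QN2 (a b e : ZMod 2) :
    (Q a b e * NN 2).trace = 2⁻¹ * (1 + cc e * uu) := by
  simp [Q, NN, Matrix.trace, Matrix.mul_apply, Fin.sum_univ_two, smul_eq_mul]
  all_goals ring1

private lemma re_half (v : ZMod 2) :
    ((2:ℂ)⁻¹ * (1 + cc v * uu)).re
      = 1 / 2 * (1 + (if v = 0 then (1:ℝ) else -1) / Real.sqrt 3) := by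
  have h3 : Real.sqrt 3 ≠ 0 := by positivity
  by_cases hv : v = 0
  · have h : (2:ℂ)⁻¹ * (1 + cc v * uu)
        = ((2⁻¹ * (1 + (Real.sqrt 3)⁻¹) : ℝ) : ℂ) := by
      rw [hv, cc0, uu]
      push_cast
      ring
    rw [h, Complex.ofReal_re, if_pos hv]
    field_simp
  · have hv1 : v = 1 := by revert hv; revert v; decide
    have h : (2:ℂ)⁻¹ * (1 + cc v * uu)
        = ((2⁻¹ * (1 - (Real.sqrt 3)⁻¹) : ℝ) : ℂ) := by
      rw [hv1, cc1, uu]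
      push_cast
      ring
    rw [h, Complex.ofReal_re, if_neg hv]
    field_simp
    ring

private lemma K_sub_right (A B C : Matrix (Fin 2) (Fin 2) ℂ) :
    K A (B - C) = K A B - K A C := by
  ext i j
  simp [K, reindex_apply, submatrix_apply, kroneckerMap_apply, mul_sub]

private lemma hermK1 (j : Fin 3) : (K (NN j) 1).IsHermitian :=
  show _ = _ by rw [K_conjT, NN_herm, Matrix.conjTranspose_one]

private lemma hermK2 (j : Fin 3) : (K 1 (NN j)).IsHermitian :=
  show _ = _ by rw [K_conjT, NN_herm, Matrix.conjTranspose_one]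

private lemma psdK1 (j : Fin 3) : (K (NN j) 1).PosSemidef :=
  proj_psd _ (hermK1 j) (by rw [K_mul, NN_idem, one_mul])

private lemma psdK2 (j : Fin 3) : (K 1 (NN j)).PosSemidef :=
  proj_psd _ (hermK2 j) (by rw [K_mul, NN_idem, one_mul])

private lemma psd1subK1 (j : Fin 3) :
    ((1 : Matrix (Fin 4) (Fin 4) ℂ) - K (NN j) 1).PosSemidef := by
  rw [show (1 : Matrix (Fin 4) (Fin 4) ℂ) = K 1 1 from K_one.symm, ← K_sub_left]
  refine proj_psd _ ?_ ?_
  · rw [K_conjT, Matrix.conjTranspose_sub, NN_herm, Matrix.conjTranspose_one]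
  · rw [K_mul, one_sub_idem _ (NN_idem j), one_mul]

private lemma psd1subK2 (j : Fin 3) :
    ((1 : Matrix (Fin 4) (Fin 4) ℂ) - K 1 (NN j)).PosSemidef := by
  rw [show (1 : Matrix (Fin 4) (Fin 4) ℂ) = K 1 1 from K_one.symm, ← K_sub_right]
  refine proj_psd _ ?_ ?_
  · rw [K_conjT, Matrix.conjTranspose_sub, NN_herm, Matrix.conjTranspose_one]
  · rw [K_mul, one_sub_idem _ (NN_idem j), one_mul]

/-- the states -/
private noncomputable def ρQ (x : Fin 6 → ZMod 2) : Matrix (Fin 4) (Fin 4) ℂ :=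
  K (Q (x 0) (x 1) (x 2)) (Q (x 3) (x 4) (x 5))

/-- the measurements -/
private noncomputable def MQ : Fin 6 → Matrix (Fin 4) (Fin 4) ℂ :=
  ![K (NN 0) 1, K (NN 1) 1, K (NN 2) 1, K 1 (NN 0), K 1 (NN 1), K 1 (NN 2)]

private abbrev T3 := ZMod 2 × ZMod 2 × ZMod 2

private def eqv : T3 × T3 ≃ (Fin 6 → ZMod 2) where
  toFun := fun p => ![p.1.1, p.1.2.1, p.1.2.2, p.2.1, p.2.2.1, p.2.2.2]
  invFun := fun x => ((x 0, x 1, x 2), (x 3, x 4, x 5))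
  left_inv := fun p => rfl
  right_inv := fun x => by funext i; fin_cases i <;> rfl

private lemma sumZ2 {α : Type*} [AddCommMonoid α] (h : ZMod 2 → α) :
    ∑ z, h z = h 0 + h 1 := by
  rw [show (univ : Finset (ZMod 2)) = {0, 1} from rfl,
    Finset.sum_insert (by decide), Finset.sum_singleton]

private lemma V01 : ∑ a : T3, cc (a.1 + a.2.1) • Q a.1 a.2.1 a.2.2 = 0 := by
  simp only [Fintype.sum_prod_type, sumZ2, zero_add, add_zero, z11, cc0, cc1]
  ext i j
  fin_cases i <;> fin_cases j <;> simp [Q] <;> ring1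

private lemma V02 : ∑ a : T3, cc (a.1 + a.2.2) • Q a.1 a.2.1 a.2.2 = 0 := by
  simp only [Fintype.sum_prod_type, sumZ2, zero_add, add_zero, z11, cc0, cc1]
  ext i j
  fin_cases i <;> fin_cases j <;> simp [Q] <;> ring1

private lemma V12 : ∑ a : T3, cc (a.2.1 + a.2.2) • Q a.1 a.2.1 a.2.2 = 0 := by
  simp only [Fintype.sum_prod_type, sumZ2, zero_add, add_zero, z11, cc0, cc1]
  ext i j
  fin_cases i <;> fin_cases j <;> simp [Q] <;> ring1

private lemma V012 : ∑ a : T3, cc (a.1 + a.2.1 + a.2.2) • Q a.1 a.2.1 a.2.2 = 0 := by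
  simp only [Fintype.sum_prod_type, sumZ2, zero_add, add_zero, z11, cc0, cc1]
  ext i j
  fin_cases i <;> fin_cases j <;> simp [Q] <;> ring1

attribute [irreducible] cc uu Q K NN

private lemma signed_sum_zero (S : Finset (Fin 6)) (f g : ZMod 2 → ZMod 2 → ZMod 2 → ZMod 2)
    (hS : ∀ x : Fin 6 → ZMod 2, ∑ i ∈ S, x i = f (x 0) (x 1) (x 2) + g (x 3) (x 4) (x 5))
    (h : (∑ a : T3, cc (f a.1 a.2.1 a.2.2) • Q a.1 a.2.1 a.2.2 = 0)
       ∨ (∑ b : T3, cc (g b.1 b.2.1 b.2.2) • Q b.1 b.2.1 b.2.2 = 0)) :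
    ∑ x : Fin 6 → ZMod 2, cc (∑ i ∈ S, x i) • ρQ x = 0 := by
  rw [← Equiv.sum_comp eqv (fun x => cc (∑ i ∈ S, x i) • ρQ x)]
  rw [Fintype.sum_prod_type]
  have key : ∀ p : T3 × T3, cc (∑ i ∈ S, eqv p i) • ρQ (eqv p)
      = K (cc (f p.1.1 p.1.2.1 p.1.2.2) • Q p.1.1 p.1.2.1 p.1.2.2)
          (cc (g p.2.1 p.2.2.1 p.2.2.2) • Q p.2.1 p.2.2.1 p.2.2.2) := by
    intro p
    have h1 : ρQ (eqv p) = K (Q p.1.1 p.1.2.1 p.1.2.2) (Q p.2.1 p.2.2.1 p.2.2.2) := rfl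
    have h2 : ∑ i ∈ S, eqv p i
        = f p.1.1 p.1.2.1 p.1.2.2 + g p.2.1 p.2.2.1 p.2.2.2 := by
      rw [hS (eqv p)]; rfl
    rw [h1, h2, cc_add, K_smul_left, K_smul_right, smul_smul]
  calc (∑ p1 : T3, ∑ p2 : T3, cc (∑ i ∈ S, eqv (p1, p2) i) • ρQ (eqv (p1, p2)))
      = ∑ p1 : T3, ∑ p2 : T3,
          K (cc (f p1.1 p1.2.1 p1.2.2) • Q p1.1 p1.2.1 p1.2.2)
            (cc (g p2.1 p2.2.1 p2.2.2) • Q p2.1 p2.2.1 p2.2.2) :=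
        Finset.sum_congr rfl fun p1 _ => Finset.sum_congr rfl fun p2 _ => key (p1, p2)
    _ = K (∑ a : T3, cc (f a.1 a.2.1 a.2.2) • Q a.1 a.2.1 a.2.2)
          (∑ b : T3, cc (g b.1 b.2.1 b.2.2) • Q b.1 b.2.1 b.2.2) := by
        rw [K_sum_left]
        exact Finset.sum_congr rfl fun p1 _ => (K_sum_right _ _ _).symm
    _ = 0 := by
        rcases h with h | h
        · rw [h, K_zero_left]
        · rw [h, K_zero_right]

private lemma zmod_ne (z : ZMod 2) (h : z ≠ 0) : z = 1 := by
  revert h; revert z; decide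

private lemma two_of_three : ∀ S : Finset (Fin 6), 3 ≤ S.card →
    (((0:Fin 6) ∈ S ∧ 1 ∈ S) ∨ ((0:Fin 6) ∈ S ∧ 2 ∈ S) ∨ ((1:Fin 6) ∈ S ∧ 2 ∈ S)) ∨
    (((3:Fin 6) ∈ S ∧ 4 ∈ S) ∨ ((3:Fin 6) ∈ S ∧ 5 ∈ S) ∨ ((4:Fin 6) ∈ S ∧ 5 ∈ S)) := by
  decide

/-- There is an odd-parity-oblivious quantum random access code of 6 bits
(hiding `x_S` for every odd-size subset `S` with `|S| ≥ 3`) in which every bit is decoded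
with probability exactly `(1/2)(1 + 1/√3)`, i.e. with bias `1/√3 > 1/√6`. -/
theorem exists_odd_parity_oblivious_qrac_six_bits :
    ∃ (d : ℕ), 1 ≤ d ∧
    ∃ (ρ : (Fin 6 → ZMod 2) → Matrix (Fin d) (Fin d) ℂ)
      (M : Fin 6 → Matrix (Fin d) (Fin d) ℂ),
      (∀ x, (ρ x).PosSemidef) ∧
      (∀ x, (ρ x).trace = 1) ∧
      (∀ t, (M t).IsHermitian) ∧
      (∀ t, (M t).PosSemidef) ∧
      (∀ t, ((1 : Matrix (Fin d) (Fin d) ℂ) - M t).PosSemidef) ∧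
      (∀ S : Finset (Fin 6), Odd S.card → 3 ≤ S.card →
        ∑ x ∈ Finset.univ.filter (fun x : Fin 6 → ZMod 2 => ∑ i ∈ S, x i = 0), ρ x =
        ∑ x ∈ Finset.univ.filter (fun x : Fin 6 → ZMod 2 => ∑ i ∈ S, x i = 1), ρ x) ∧
      (∀ (x : Fin 6 → ZMod 2) (t : Fin 6),
        ((ρ x * M t).trace).re =
          (1 / 2) * (1 + (if x t = 0 then (1 : ℝ) else -1) / Real.sqrt 3)) := by
  refine ⟨4, by norm_num, ρQ, MQ, ?_, ?_, ?_, ?_, ?_, ?_, ?_⟩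
  · -- PSD of states
    intro x
    refine proj_psd _ ?_ ?_
    · rw [ρQ, K_conjT, Q_herm, Q_herm]
    · rw [ρQ, K_mul, Q_idem, Q_idem]
  · -- trace one
    intro x
    rw [ρQ, K_trace, Q_trace, Q_trace, mul_one]
  · -- M Hermitian
    intro t
    fin_cases t
    exacts [hermK1 0, hermK1 1, hermK1 2, hermK2 0, hermK2 1, hermK2 2]
  · -- M PSD
    intro t
    fin_cases t
    exacts [psdK1 0, psdK1 1, psdK1 2, psdK2 0, psdK2 1, psdK2 2]
  · -- 1 - M PSD
    intro t
    fin_cases t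
    exacts [psd1subK1 0, psd1subK1 1, psd1subK1 2, psd1subK2 0, psd1subK2 1, psd1subK2 2]
  · -- parity obliviousness
    intro S _hodd hcard
    have hz := signed_sum_zero S
      (fun a0 a1 a2 => (if (0:Fin 6) ∈ S then a0 else 0) + (if (1:Fin 6) ∈ S then a1 else 0)
        + (if (2:Fin 6) ∈ S then a2 else 0))
      (fun b0 b1 b2 => (if (3:Fin 6) ∈ S then b0 else 0) + (if (4:Fin 6) ∈ S then b1 else 0)
        + (if (5:Fin 6) ∈ S then b2 else 0))
      (by
        intro x
        conv_lhs => rw [← Finset.univ_inter S, ← Finset.sum_ite_mem, Fin.sum_univ_six]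
        ring)
      (by
        rcases two_of_three S hcard with h | h
        · left
          by_cases h0 : (0:Fin 6) ∈ S <;> by_cases h1 : (1:Fin 6) ∈ S <;>
            by_cases h2 : (2:Fin 6) ∈ S <;>
            simp only [h0, h1, h2, if_true, if_false, add_zero, zero_add] <;>
            first
              | exact V012
              | exact V01
              | exact V02
              | exact V12
              | tauto
        · right
          by_cases h0 : (3:Fin 6) ∈ S <;> by_cases h1 : (4:Fin 6) ∈ S <;>
            by_cases h2 : (5:Fin 6) ∈ S <;>
            simp only [h0, h1, h2, if_true, if_false, add_zero, zero_add] <;>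
            first
              | exact V012
              | exact V01
              | exact V02
              | exact V12
              | tauto)
    rw [← Finset.sum_filter_add_sum_filter_not univ (fun x => ∑ i ∈ S, x i = 0)] at hz
    have A : ∑ x ∈ univ.filter (fun x : Fin 6 → ZMod 2 => ∑ i ∈ S, x i = 0),
        cc (∑ i ∈ S, x i) • ρQ x
        = ∑ x ∈ univ.filter (fun x : Fin 6 → ZMod 2 => ∑ i ∈ S, x i = 0), ρQ x :=
      Finset.sum_congr rfl fun x hx => by
        rw [(Finset.mem_filter.mp hx).2, cc0, one_smul]
    have B : ∑ x ∈ univ.filter (fun x : Fin 6 → ZMod 2 => ¬(∑ i ∈ S, x i = 0)),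
        cc (∑ i ∈ S, x i) • ρQ x
        = -∑ x ∈ univ.filter (fun x : Fin 6 → ZMod 2 => ¬(∑ i ∈ S, x i = 0)), ρQ x := by
      rw [← Finset.sum_neg_distrib]
      exact Finset.sum_congr rfl fun x hx => by
        rw [zmod_ne _ (Finset.mem_filter.mp hx).2, cc1, neg_smul, one_smul]
    rw [A, B] at hz
    have hfe : univ.filter (fun x : Fin 6 → ZMod 2 => ∑ i ∈ S, x i = 1)
        = univ.filter (fun x : Fin 6 → ZMod 2 => ¬(∑ i ∈ S, x i = 0)) := by
      refine Finset.filter_congr fun x _ => ?_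
      constructor
      · intro h h0; rw [h0] at h; exact one_ne_zero h.symm
      · intro h; exact zmod_ne _ h
    rw [hfe]
    refine sub_eq_zero.mp ?_
    rw [sub_eq_add_neg]
    exact hz
  · -- decoding
    intro x t
    fin_cases t
    · show ((ρQ x * K (NN 0) 1).trace).re = _
      rw [ρQ, K_mul, K_trace, mul_one, Q_trace, mul_one, trace_QN0, re_half]
      rfl
    · show ((ρQ x * K (NN 1) 1).trace).re = _
      rw [ρQ, K_mul, K_trace, mul_one, Q_trace, mul_one, trace_QN1, re_half]
      rfl
    · show ((ρQ x * K (NN 2) 1).trace).re = _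
      rw [ρQ, K_mul, K_trace, mul_one, Q_trace, mul_one, trace_QN2, re_half]
      rfl
    · show ((ρQ x * K 1 (NN 0)).trace).re = _
      rw [ρQ, K_mul, K_trace, mul_one, Q_trace, one_mul, trace_QN0, re_half]
      rfl
    · show ((ρQ x * K 1 (NN 1)).trace).re = _
      rw [ρQ, K_mul, K_trace, mul_one, Q_trace, one_mul, trace_QN1, re_half]
      rfl
    · show ((ρQ x * K 1 (NN 2)).trace).re = _
      rw [ρQ, K_mul, K_trace, mul_one, Q_trace, one_mul, trace_QN2, re_half]
      rfl

end QRAC16
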